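/- For every nonnegative integer n, the two-variable exponential generating function \sum_{l,m\ge 0} \mathscr{B}_m^{(-l)}(n) x^l y^m/(l! m!) equals n! e^{x+y}/(e^x + e^y - e^{x+y})^{n+1}, where \mathscr{B}_m^{(-l)}(n) = \sum_{j=0}^{n} [n choose_1 j] B_m^{(-l-j)}(n). -/

import Mathlib

open PowerSeries Finset

/-- Unsigned Stirling numbers of the first kind. -/
def stirling1 : ℕ → ℕ → ℕ
  | 0, 0 => 1
  | 0, _ + 1 => 0
  | _ + 1, 0 => 0
  | n + 1, m + 1 => stirling1 n m + n * stirling1 n (m + 1)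

/-- Stirling numbers of the second kind. -/
def stirling2 : ℕ → ℕ → ℕ
  | 0, 0 => 1
  | 0, _ + 1 => 0
  | _ + 1, 0 => 0
  | n + 1, m + 1 => stirling2 n m + (m + 1) * stirling2 n (m + 1)

/-- e^t as a formal power series over ℚ. -/
noncomputable def expQ : PowerSeries ℚ := PowerSeries.exp ℚ

/-- e^{-t} as a formal power series over ℚ. -/
noncomputable def expNegQ : PowerSeries ℚ := rescale (-1) expQ

/-- The formal power series Li_k(1-e^{-t})/(1-e^{-t}) = ∑_{m≥0} (m+1)^{-k} (1-e^{-t})^m,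
  defined coefficientwise (the tail vanishes since (1-e^{-t})^m has order m). -/
noncomputable def liEGF (k : ℤ) : PowerSeries ℚ :=
  PowerSeries.mk fun j =>
    ∑ m ∈ range (j + 1), ((m : ℚ) + 1) ^ (-k) * coeff (R := ℚ) j ((1 - expNegQ) ^ m)

/-- EGF of the poly-Bernoulli polynomials: e^{-xt} Li_k(1-e^{-t})/(1-e^{-t}). -/
noncomputable def pbEGF (k : ℤ) (x : ℚ) : PowerSeries ℚ := rescale (-x) expQ * liEGF k

/-- Poly-Bernoulli polynomial value B_m^{(k)}(x). -/
noncomputable def pbPoly (k : ℤ) (x : ℚ) (m : ℕ) : ℚ := m.factorial * coeff (R := ℚ) m (pbEGF k x)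

/-- Poly-Bernoulli number B_m^{(k)}. -/
noncomputable def pbB (k : ℤ) (m : ℕ) : ℚ := pbPoly k 0 m

/-- Poly-Bernoulli number C_m^{(k)}. -/
noncomputable def pbC (k : ℤ) (m : ℕ) : ℚ := pbPoly k 1 m

/-- 𝓑_m^{(-l)}(n) = ∑_{j=0}^n [n j] B_m^{(-l-j)}(n). -/
noncomputable def scrB (l m n : ℕ) : ℚ :=
  ∑ j ∈ range (n + 1), (stirling1 n j : ℚ) * pbPoly (-(l : ℤ) - j) n m

/-- e^x, viewed in ℚ[[x]][[y]] (a series in x, constant in y). -/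
noncomputable def eX : PowerSeries (PowerSeries ℚ) := PowerSeries.C (R := PowerSeries ℚ) expQ

/-- e^y, viewed in ℚ[[x]][[y]]. -/
noncomputable def eY : PowerSeries (PowerSeries ℚ) := PowerSeries.exp (PowerSeries ℚ)

/-! ### Auxiliary lemmas -/

section Aux

lemma stirling1_eq_zero : ∀ {n j : ℕ}, n < j → stirling1 n j = 0 := by
  intro n
  induction n with
  | zero => intro j h; match j, h with | j+1, _ => rfl
  | succ n ih =>
    intro j h
    match j, h with
    | j+1, h =>
      show stirling1 n j + n * stirling1 n (j+1) = 0
      rw [ih (by omega), ih (by omega)]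
      simp

lemma n_mul_stirling1_zero (n : ℕ) : (n : ℚ) * (stirling1 n 0 : ℚ) = 0 := by
  cases n <;> simp [stirling1]

lemma sum_stirling1_mul_pow (n : ℕ) (z : ℚ) :
    ∑ j ∈ range (n+1), (stirling1 n j : ℚ) * z ^ j = ∏ k ∈ range n, (z + k) := by
  induction n with
  | zero => simp [stirling1]
  | succ n ih =>
    rw [Finset.sum_range_succ' (fun j => (stirling1 (n+1) j : ℚ) * z ^ j)]
    have hrec : ∀ j, stirling1 (n+1) (j+1) = stirling1 n j + n * stirling1 n (j+1) :=
      fun j => rfl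
    have h1 : ∑ j ∈ range (n+1), (stirling1 (n+1) (j+1) : ℚ) * z ^ (j+1)
        = z * (∑ j ∈ range (n+1), (stirling1 n j : ℚ) * z ^ j)
          + (n : ℚ) * ∑ j ∈ range (n+1), (stirling1 n (j+1) : ℚ) * z ^ (j+1) := by
      rw [Finset.mul_sum, Finset.mul_sum, ← Finset.sum_add_distrib]
      refine Finset.sum_congr rfl fun j _ => ?_
      rw [hrec j]; push_cast; ring
    have h2 : (n : ℚ) * ∑ j ∈ range (n+1), (stirling1 n (j+1) : ℚ) * z ^ (j+1)
        = (n : ℚ) * ∑ j ∈ range (n+1), (stirling1 n j : ℚ) * z ^ j := by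
      have h5 := Finset.sum_range_succ' (fun j => (stirling1 n j : ℚ) * z ^ j) (n+1)
      rw [Finset.sum_range_succ (fun j => (stirling1 n j : ℚ) * z ^ j) (n+1),
        stirling1_eq_zero (Nat.lt_succ_self n)] at h5
      simp only [Nat.cast_zero, zero_mul, add_zero, pow_zero, mul_one] at h5
      rw [h5, mul_add, n_mul_stirling1_zero, add_zero]
    rw [h1, h2, ih, Finset.prod_range_succ]
    have h0 : stirling1 (n+1) 0 = 0 := rfl
    rw [h0]
    push_cast
    ring

lemma geom_step {R : Type*} [CommRing R] (n : ℕ) (z : R) :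
    ∀ N : ℕ, (∑ i ∈ range N, ((n+i+1).choose i : R) * z^i) * (1 - z) =
      (∑ i ∈ range N, ((n+i).choose i : R) * z^i)
        - z^N * (((n+N+1).choose N : R) - ((n+N).choose N : R)) := by
  intro N
  induction N with
  | zero => simp
  | succ N ih =>
    rw [Finset.sum_range_succ, add_mul, ih,
      Finset.sum_range_succ (fun i => ((n+i).choose i : R) * z^i),
      show n+(N+1)+1 = n+N+2 from by omega, show n+(N+1) = n+N+1 from by omega]
    have hP : ((n+N+2).choose (N+1) : R)
        = ((n+N+1).choose N : R) + ((n+N+1).choose (N+1) : R) := by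
      rw [show n+N+2 = (n+N+1)+1 from by omega, Nat.choose_succ_succ' (n+N+1) N]
      push_cast; ring
    linear_combination z^(N+1) * hP

lemma geom_pow {R : Type*} [CommRing R] (n : ℕ) (z : R) (N : ℕ) :
    ∃ S : R, (∑ i ∈ range N, ((n+i).choose i : R) * z^i) * (1 - z)^(n+1) = 1 - z^N * S := by
  induction n with
  | zero =>
    refine ⟨1, ?_⟩
    have h2 : ∑ i ∈ range N, ((0+i).choose i : R) * z^i = ∑ i ∈ range N, z^i :=
      Finset.sum_congr rfl fun i _ => by simp
    rw [h2, pow_one]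
    calc (∑ i ∈ range N, z^i) * (1 - z) = -((∑ i ∈ range N, z^i) * (z - 1)) := by ring
      _ = -(z^N - 1) := by rw [geom_sum_mul]
      _ = 1 - z^N * 1 := by ring
  | succ n ih =>
    obtain ⟨S, hS⟩ := ih
    refine ⟨S + (((n+N+1).choose N : R) - ((n+N).choose N : R)) * (1-z)^(n+1), ?_⟩
    have key := geom_step n z N
    have hsum : ∑ i ∈ range N, ((n+1+i).choose i : R) * z^i
        = ∑ i ∈ range N, ((n+i+1).choose i : R) * z^i :=
      Finset.sum_congr rfl fun i _ => by rw [show n+1+i = n+i+1 from by omega]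
    calc (∑ i ∈ range N, ((n+1+i).choose i : R) * z^i) * (1 - z)^(n+1+1)
        = ((∑ i ∈ range N, ((n+i+1).choose i : R) * z^i) * (1 - z)) * (1-z)^(n+1) := by
          rw [hsum]; ring
      _ = ((∑ i ∈ range N, ((n+i).choose i : R) * z^i)
            - z^N * (((n+N+1).choose N : R) - ((n+N).choose N : R))) * (1-z)^(n+1) := by
          rw [key]
      _ = (∑ i ∈ range N, ((n+i).choose i : R) * z^i) * (1-z)^(n+1)
            - z^N * ((((n+N+1).choose N : R) - ((n+N).choose N : R)) * (1-z)^(n+1)) := by ring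
      _ = 1 - z^N * S - z^N * ((((n+N+1).choose N : R) - ((n+N).choose N : R)) * (1-z)^(n+1)) := by
          rw [hS]
      _ = _ := by ring

lemma coeff_expQ (l : ℕ) : coeff (R := ℚ) l expQ = 1 / l.factorial := by
  rw [expQ, coeff_exp]; simp

lemma coeff_expQ_pow (k l : ℕ) : coeff (R := ℚ) l (expQ ^ k) = (k:ℚ)^l / l.factorial := by
  rw [expQ, exp_pow_eq_rescale_exp, coeff_rescale, coeff_exp]
  simp [div_eq_mul_inv]

lemma expNegQ_pow (k : ℕ) : expNegQ ^ k = rescale (-(k:ℚ)) expQ := by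
  rw [expNegQ, ← map_pow, expQ, exp_pow_eq_rescale_exp, rescale_rescale]
  norm_num

lemma expQ_mul_expNegQ : expQ * expNegQ = 1 := by
  have := PowerSeries.exp_mul_exp_neg_eq_one (A := ℚ)
  rw [expQ, expNegQ, expQ]
  exact this

lemma constantCoeff_expNegQ : constantCoeff (R := ℚ) expNegQ = 1 := by
  rw [← coeff_zero_eq_constantCoeff_apply, expNegQ, coeff_rescale, coeff_expQ]
  simp

lemma coeff_oneSub_pow_eq_zero {i b : ℕ} (h : b < i) :
    coeff (R := ℚ) b ((1 - expNegQ) ^ i) = 0 := by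
  have h1 : (X : PowerSeries ℚ) ∣ (1 - expNegQ) := by
    rw [PowerSeries.X_dvd_iff, map_sub, constantCoeff_expNegQ, map_one, sub_self]
  have h2 : (X : PowerSeries ℚ)^i ∣ (1 - expNegQ)^i := pow_dvd_pow_of_dvd h1 i
  exact (PowerSeries.X_pow_dvd_iff.mp h2) b h

lemma coeff_mul_oneSub_pow_eq_zero {i b n : ℕ} (h : b < i) :
    coeff (R := ℚ) b (expNegQ ^ n * (1 - expNegQ) ^ i) = 0 := by
  have h1 : (X : PowerSeries ℚ) ∣ (1 - expNegQ) := by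
    rw [PowerSeries.X_dvd_iff, map_sub, constantCoeff_expNegQ, map_one, sub_self]
  have h2 : (X : PowerSeries ℚ)^i ∣ expNegQ ^ n * (1 - expNegQ)^i :=
    Dvd.dvd.mul_left (pow_dvd_pow_of_dvd h1 i) _
  exact (PowerSeries.X_pow_dvd_iff.mp h2) b h

lemma coeff_mul_congr {R : Type*} [CommSemiring R] {f g : PowerSeries R} {m : ℕ}
    (h : ∀ j ≤ m, coeff (R := R) j f = coeff (R := R) j g) (P : PowerSeries R) :
    coeff (R := R) m (f * P) = coeff (R := R) m (g * P) := by
  rw [PowerSeries.coeff_mul, PowerSeries.coeff_mul]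
  refine Finset.sum_congr rfl fun p hp => ?_
  rw [h p.1 (by have := Finset.HasAntidiagonal.mem_antidiagonal.mp hp; omega)]

/-- The coefficientwise embedding ℚ[[t]] → ℚ[[x]][[y]] sending t to y. -/
noncomputable def liftQ : PowerSeries ℚ →+* PowerSeries (PowerSeries ℚ) :=
  PowerSeries.map (C (R := ℚ))

lemma eY_eq : eY = liftQ expQ := by
  apply PowerSeries.ext; intro m
  rw [eY, liftQ, PowerSeries.coeff_map, coeff_exp, coeff_expQ,
    PowerSeries.algebraMap_apply]
  simp

/-- e^{-y} in ℚ[[x]][[y]]. -/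
noncomputable def eYinv : PowerSeries (PowerSeries ℚ) := liftQ expNegQ

lemma eY_mul_eYinv : eY * eYinv = 1 := by
  rw [eY_eq, eYinv, ← map_mul, expQ_mul_expNegQ, map_one]

lemma constantCoeff_eY : constantCoeff (R := PowerSeries ℚ) eY = 1 := by
  rw [eY]; exact PowerSeries.constantCoeff_exp

lemma constantCoeff_eYinv : constantCoeff (R := PowerSeries ℚ) eYinv = 1 := by
  rw [← coeff_zero_eq_constantCoeff_apply, eYinv, liftQ, PowerSeries.coeff_map,
    coeff_zero_eq_constantCoeff_apply, constantCoeff_expNegQ, map_one]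

lemma prod_eq_c (n i : ℕ) :
    ∏ k ∈ range n, (((i:ℚ)+1) + k) = ((n+i).factorial : ℚ) / i.factorial := by
  induction n with
  | zero =>
    rw [Finset.prod_range_zero, Nat.zero_add, div_self]
    exact Nat.cast_ne_zero.mpr (Nat.factorial_ne_zero i)
  | succ n ih =>
    rw [Finset.prod_range_succ, ih, show n+1+i = (n+i)+1 from by omega, Nat.factorial_succ]
    have hi : ((i.factorial : ℚ)) ≠ 0 := Nat.cast_ne_zero.mpr (Nat.factorial_ne_zero i)
    field_simp
    push_cast
    ring

lemma key (n l m : ℕ) :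
    ∑ j ∈ range (n+1), (stirling1 n j : ℚ) * coeff (R := ℚ) m (expNegQ^n * liEGF (-(l:ℤ) - j)) =
    ∑ i ∈ range (m+1), (((n+i).factorial : ℚ) / i.factorial) * ((i:ℚ)+1)^l *
      coeff (R := ℚ) m (expNegQ^n * (1 - expNegQ)^i) := by
  have hzp : ∀ (i j : ℕ), ((i:ℚ)+1) ^ (-(-(l:ℤ)-(j:ℕ))) = ((i:ℚ)+1)^l * ((i:ℚ)+1)^j := by
    intro i j
    rw [show -(-(l:ℤ)-(j:ℕ)) = ((l + j : ℕ) : ℤ) from by push_cast; ring, zpow_natCast,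
      pow_add]
  calc
    ∑ j ∈ range (n+1), (stirling1 n j : ℚ) * coeff (R := ℚ) m (expNegQ^n * liEGF (-(l:ℤ) - j))
      = ∑ j ∈ range (n+1), ∑ p ∈ antidiagonal m, ∑ i ∈ range (p.2+1),
          coeff (R := ℚ) p.1 (expNegQ^n) * coeff (R := ℚ) p.2 ((1 - expNegQ)^i) * ((i:ℚ)+1)^l *
            ((stirling1 n j : ℚ) * ((i:ℚ)+1)^j) := by
        refine Finset.sum_congr rfl fun j _ => ?_
        rw [PowerSeries.coeff_mul, Finset.mul_sum]
        refine Finset.sum_congr rfl fun p _ => ?_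
        rw [liEGF, coeff_mk, Finset.mul_sum, Finset.mul_sum]
        refine Finset.sum_congr rfl fun i _ => ?_
        rw [hzp i j]
        ring
    _ = ∑ p ∈ antidiagonal m, ∑ i ∈ range (p.2+1),
          coeff (R := ℚ) p.1 (expNegQ^n) * coeff (R := ℚ) p.2 ((1 - expNegQ)^i) * ((i:ℚ)+1)^l *
            (((n+i).factorial : ℚ) / i.factorial) := by
        rw [Finset.sum_comm]
        refine Finset.sum_congr rfl fun p _ => ?_
        rw [Finset.sum_comm]
        refine Finset.sum_congr rfl fun i _ => ?_
        rw [← Finset.mul_sum, sum_stirling1_mul_pow n ((i:ℚ)+1), prod_eq_c]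
    _ = ∑ p ∈ antidiagonal m, ∑ i ∈ range (m+1),
          coeff (R := ℚ) p.1 (expNegQ^n) * coeff (R := ℚ) p.2 ((1 - expNegQ)^i) * ((i:ℚ)+1)^l *
            (((n+i).factorial : ℚ) / i.factorial) := by
        refine Finset.sum_congr rfl fun p hp => ?_
        have hple : p.2 ≤ m := by
          have := Finset.HasAntidiagonal.mem_antidiagonal.mp hp; omega
        refine Finset.sum_subset (Finset.range_subset_range.mpr (by omega)) fun i _ hi => ?_
        have : p.2 < i := by
          simp only [Finset.mem_range] at hi; omega
        rw [coeff_oneSub_pow_eq_zero this]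
        ring
    _ = ∑ i ∈ range (m+1), (((n+i).factorial : ℚ) / i.factorial) * ((i:ℚ)+1)^l *
          coeff (R := ℚ) m (expNegQ^n * (1 - expNegQ)^i) := by
        rw [Finset.sum_comm]
        refine Finset.sum_congr rfl fun i _ => ?_
        rw [PowerSeries.coeff_mul, Finset.mul_sum]
        refine Finset.sum_congr rfl fun p _ => ?_
        ring

/-- coefficient of `expNegQ^n (1-expNegQ)^i` -/
noncomputable def qq (n i m : ℕ) : ℚ := coeff (R := ℚ) m (expNegQ^n * (1 - expNegQ)^i)

/-- `(n+i)!/i!` -/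
noncomputable def cc (n i : ℕ) : ℚ := ((n+i).factorial : ℚ) / i.factorial

/-- The closed form of the generating function, defined coefficientwise. -/
noncomputable def Gt (n : ℕ) : PowerSeries (PowerSeries ℚ) :=
  PowerSeries.mk fun m =>
    ∑ i ∈ range (m+1), PowerSeries.C (R := ℚ) (cc n i * qq n i m) * expQ^(i+1)

/-- A truncated honest power series approximating `Gt`. -/
noncomputable def Hm (n m : ℕ) : PowerSeries (PowerSeries ℚ) :=
  eYinv^n * ∑ i ∈ range (m+1),
    algebraMap ℚ (PowerSeries (PowerSeries ℚ)) (cc n i) * eX^(i+1) * (1 - eYinv)^i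

lemma algebraMap_eq_CC (r : ℚ) :
    algebraMap ℚ (PowerSeries (PowerSeries ℚ)) r
      = PowerSeries.C (R := PowerSeries ℚ) (PowerSeries.C (R := ℚ) r) := by
  rw [PowerSeries.algebraMap_apply, PowerSeries.algebraMap_apply]
  simp

lemma coeff_Hm (n m j : ℕ) :
    coeff (R := PowerSeries ℚ) j (Hm n m)
      = ∑ i ∈ range (m+1), PowerSeries.C (R := ℚ) (cc n i * qq n i j) * expQ^(i+1) := by
  rw [Hm, Finset.mul_sum, map_sum]
  refine Finset.sum_congr rfl fun i _ => ?_
  have hU : (1 - eYinv : PowerSeries (PowerSeries ℚ)) = liftQ (1 - expNegQ) := by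
    rw [map_sub, map_one, eYinv]
  have hterm : eYinv^n * (algebraMap ℚ (PowerSeries (PowerSeries ℚ)) (cc n i)
        * eX^(i+1) * (1 - eYinv)^i)
      = PowerSeries.C (R := PowerSeries ℚ) (PowerSeries.C (R := ℚ) (cc n i) * expQ^(i+1))
          * liftQ (expNegQ^n * (1 - expNegQ)^i) := by
    have heX : eX = PowerSeries.C (R := PowerSeries ℚ) expQ := rfl
    rw [hU, algebraMap_eq_CC, eYinv, heX, map_mul (PowerSeries.C (R := PowerSeries ℚ)),
      map_pow (PowerSeries.C (R := PowerSeries ℚ)), map_mul liftQ, map_pow liftQ, map_pow liftQ]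
    ring
  rw [hterm, PowerSeries.coeff_C_mul, liftQ, PowerSeries.coeff_map]
  have : qq n i j = coeff (R := ℚ) j (expNegQ^n * (1 - expNegQ)^i) := rfl
  rw [← this, map_mul]
  ring

lemma coeff_Gt_eq_coeff_Hm (n m j : ℕ) (h : j ≤ m) :
    coeff (R := PowerSeries ℚ) j (Gt n) = coeff (R := PowerSeries ℚ) j (Hm n m) := by
  rw [Gt, coeff_mk, coeff_Hm]
  refine Finset.sum_subset (Finset.range_subset_range.mpr (by omega)) fun i _ hi => ?_
  have hj : j < i := by simp only [Finset.mem_range] at hi; omega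
  have : qq n i j = 0 := coeff_mul_oneSub_pow_eq_zero hj
  rw [this, mul_zero, map_zero, zero_mul]

lemma constantCoeff_eXU :
    constantCoeff (R := PowerSeries ℚ) (eX * (1 - eYinv)) = 0 := by
  rw [map_mul, map_sub, map_one, constantCoeff_eYinv, sub_self, mul_zero]

lemma Gt_mul (n : ℕ) :
    Gt n * (eX + eY - eX*eY)^(n+1)
      = (n.factorial : PowerSeries (PowerSeries ℚ)) * (eX * eY) := by
  apply PowerSeries.ext; intro m
  -- replace Gt by Hm n m
  rw [coeff_mul_congr (fun j hj => coeff_Gt_eq_coeff_Hm n m j hj) _]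
  -- key factorization of the denominator
  have hD : (eX + eY - eX*eY : PowerSeries (PowerSeries ℚ))
      = eY * (1 - eX * (1 - eYinv)) := by
    have h := eY_mul_eYinv
    linear_combination (-eX) * h
  have e1 : (eYinv:PowerSeries (PowerSeries ℚ))^n * eY^(n+1) = eY := by
    have h : (eY:PowerSeries (PowerSeries ℚ))^n * eYinv^n = 1 := by
      rw [← mul_pow, eY_mul_eYinv, one_pow]
    calc (eYinv:PowerSeries (PowerSeries ℚ))^n * eY^(n+1)
        = (eY^n * eYinv^n) * eY := by ring
      _ = eY := by rw [h, one_mul]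
  have hfact : ∀ i : ℕ, algebraMap ℚ (PowerSeries (PowerSeries ℚ)) (cc n i)
      = (n.factorial : PowerSeries (PowerSeries ℚ)) * ((n+i).choose i : PowerSeries (PowerSeries ℚ)) := by
    intro i
    have hQ : cc n i = ((n.factorial : ℚ)) * ((n+i).choose i : ℚ) := by
      rw [cc]
      have h := Nat.choose_mul_factorial_mul_factorial (Nat.le_add_left i n)
      rw [Nat.add_sub_cancel] at h
      have hi : ((i.factorial : ℚ)) ≠ 0 := Nat.cast_ne_zero.mpr (Nat.factorial_ne_zero i)
      field_simp
      rw [← h]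
      push_cast
      ring
    rw [hQ, map_mul, map_natCast, map_natCast]
  have hsum : (∑ i ∈ range (m+1),
        algebraMap ℚ (PowerSeries (PowerSeries ℚ)) (cc n i) * eX^(i+1) * (1 - eYinv)^i)
      = (n.factorial : PowerSeries (PowerSeries ℚ)) * eX *
          ∑ i ∈ range (m+1), ((n+i).choose i : PowerSeries (PowerSeries ℚ))
            * (eX * (1 - eYinv))^i := by
    rw [Finset.mul_sum]
    refine Finset.sum_congr rfl fun i _ => ?_
    rw [hfact i, mul_pow]
    ring
  obtain ⟨S, hS⟩ := geom_pow n (eX * (1 - eYinv) : PowerSeries (PowerSeries ℚ)) (m+1)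
  have hHD : Hm n m * (eX + eY - eX*eY)^(n+1)
      = (n.factorial : PowerSeries (PowerSeries ℚ)) * (eX * eY)
        - (eX * (1 - eYinv))^(m+1) *
            (S * ((n.factorial : PowerSeries (PowerSeries ℚ)) * (eX * eY))) := by
    rw [Hm, hD, mul_pow, hsum]
    calc (eYinv ^ n * ((n.factorial : PowerSeries (PowerSeries ℚ)) * eX *
            ∑ i ∈ range (m+1), ((n+i).choose i : PowerSeries (PowerSeries ℚ))
              * (eX * (1 - eYinv))^i)) * (eY^(n+1) * (1 - eX * (1 - eYinv))^(n+1))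
        = (eYinv^n * eY^(n+1)) * ((n.factorial : PowerSeries (PowerSeries ℚ)) * eX) *
            ((∑ i ∈ range (m+1), ((n+i).choose i : PowerSeries (PowerSeries ℚ))
              * (eX * (1 - eYinv))^i) * (1 - eX * (1 - eYinv))^(n+1)) := by ring
      _ = eY * ((n.factorial : PowerSeries (PowerSeries ℚ)) * eX) *
            (1 - (eX * (1 - eYinv))^(m+1) * S) := by rw [e1, hS]
      _ = _ := by ring
  rw [hHD, map_sub]
  have hzero : coeff (R := PowerSeries ℚ) m ((eX * (1 - eYinv))^(m+1) *
      (S * ((n.factorial : PowerSeries (PowerSeries ℚ)) * (eX * eY)))) = 0 := by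
    have h1 : (X : PowerSeries (PowerSeries ℚ)) ∣ eX * (1 - eYinv) :=
      PowerSeries.X_dvd_iff.mpr constantCoeff_eXU
    have h2 : (X : PowerSeries (PowerSeries ℚ))^(m+1) ∣ (eX * (1 - eYinv))^(m+1) *
        (S * ((n.factorial : PowerSeries (PowerSeries ℚ)) * (eX * eY))) :=
      Dvd.dvd.mul_right (pow_dvd_pow_of_dvd h1 (m+1)) _
    exact (PowerSeries.X_pow_dvd_iff.mp h2) m (by omega)
  rw [hzero, sub_zero]

lemma stepA (n : ℕ) :
    (PowerSeries.mk fun m => PowerSeries.mk fun l =>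
        scrB l m n / ((l.factorial : ℚ) * m.factorial) : PowerSeries (PowerSeries ℚ))
      = Gt n := by
  apply PowerSeries.ext; intro m
  rw [coeff_mk, Gt, coeff_mk]
  apply PowerSeries.ext; intro l
  rw [coeff_mk, map_sum]
  have hm : ((m.factorial : ℚ)) ≠ 0 := Nat.cast_ne_zero.mpr (Nat.factorial_ne_zero m)
  have hl : ((l.factorial : ℚ)) ≠ 0 := Nat.cast_ne_zero.mpr (Nat.factorial_ne_zero l)
  have hscr : scrB l m n = m.factorial *
      ∑ j ∈ range (n+1), (stirling1 n j : ℚ) * coeff (R := ℚ) m (expNegQ^n * liEGF (-(l:ℤ) - j)) := by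
    rw [scrB, Finset.mul_sum]
    refine Finset.sum_congr rfl fun j _ => ?_
    rw [pbPoly, pbEGF, ← expNegQ_pow]
    ring
  rw [hscr, key n l m,
    show ((l.factorial : ℚ) * (m.factorial : ℚ)) = (m.factorial : ℚ) * (l.factorial : ℚ) from
      mul_comm _ _,
    mul_div_mul_left _ _ hm, Finset.sum_div]
  refine Finset.sum_congr rfl fun i _ => ?_
  rw [PowerSeries.coeff_C_mul, coeff_expQ_pow]
  have hcc' : cc n i = ((n+i).factorial : ℚ) / i.factorial := rfl
  have hqq' : qq n i m = coeff (R := ℚ) m (expNegQ ^ n * (1 - expNegQ) ^ i) := rfl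
  rw [hcc', hqq']
  push_cast
  ring

end Aux

/-- ∑_{l,m≥0} 𝓑_m^{(-l)}(n) x^l y^m/(l! m!) = n! e^{x+y}/(e^x+e^y-e^{x+y})^{n+1}. -/
theorem scrB_egf (n : ℕ) :
    (PowerSeries.mk fun m => PowerSeries.mk fun l =>
        scrB l m n / ((l.factorial : ℚ) * m.factorial) : PowerSeries (PowerSeries ℚ)) =
      (n.factorial : PowerSeries (PowerSeries ℚ)) * (eX * eY) *
        Ring.inverse ((eX + eY - eX * eY) ^ (n + 1)) := by
  have hcc : constantCoeff (R := PowerSeries ℚ) (eX + eY - eX * eY) = 1 := by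
    rw [map_sub, map_add, map_mul, constantCoeff_eY, eX, PowerSeries.constantCoeff_C]
    ring
  have hDu : IsUnit (eX + eY - eX * eY : PowerSeries (PowerSeries ℚ)) :=
    PowerSeries.isUnit_iff_constantCoeff.mpr (hcc ▸ isUnit_one)
  have hDn : IsUnit ((eX + eY - eX * eY : PowerSeries (PowerSeries ℚ))^(n+1)) := hDu.pow _
  rw [stepA n, Ring.eq_mul_inverse_iff_mul_eq _ _ _ hDn]
  exact Gt_mul n
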